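/- Let H be a random bipartite graph with parts A = {1,…,n} and B = {1,…,n} in which each of the n² possible edges is included independently with probability p ∈ (0,1), and let f : {1,…,n} → {1,…,n} be a d-limited function. For each unordered pair {i,j} of distinct vertices let Y_{ij} be the indicator that {i,j} is an edge of G_{f,H}. Then Pr[Y_{ij} = 1] = p² for every pair, and the family (Y_{ij}) is (2d−2)-locally dependent: for each pair {i,j} there is a set of at most 2d−2 other pairs (namely the pairs {i,u} with f(u) = f(j), u ≠ j, and the pairs {j,u} with f(u) = f(i), u ≠ i) such that Y_{ij} is independent of the joint family of the indicators of all remaining pairs. In particular, G_{f,H} is a (2d−2)-dependent random graph with edge probability p². -/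

import Mathlib

/-- A function `f : [n] → [n]` is `d`-limited if every point has at most `d` preimages. -/
def DLimited (n d : ℕ) (f : Fin n → Fin n) : Prop :=
  ∀ j : Fin n, (Finset.univ.filter fun i => f i = j).card ≤ d

/-- For a bipartite graph `H` with parts `[n]` and `[n]`, a function `f` and a pair
`{i, j}`, the prescribed dependency set: the pairs `{i,u}` with `f u = f j`, `u ≠ j`,
together with the pairs `{j,u}` with `f u = f i`, `u ≠ i`. -/
def depSet (n : ℕ) (f : Fin n → Fin n) (i j : Fin n) : Finset (Sym2 (Fin n)) :=
  ((Finset.univ.filter fun u : Fin n => f u = f j ∧ u ≠ j).image fun u => s(i, u)) ∪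
    ((Finset.univ.filter fun u : Fin n => f u = f i ∧ u ≠ i).image fun u => s(j, u))

lemma meas_and_aux {ι : Type*} [Countable ι] (a b : ι) :
    Measurable (fun h : ι → Bool => h a && h b) := by
  have h1 : Measurable (fun x : Bool × Bool => x.1 && x.2) := measurable_of_countable _
  have h2 : Measurable (fun h : ι → Bool => (h a, h b)) :=
    (measurable_pi_apply a).prodMk (measurable_pi_apply b)
  exact h1.comp h2

lemma sym2_out_eq {α : Type*} (g : Sym2 α) : s((Quot.out g).1, (Quot.out g).2) = g := by
  show Quot.mk _ ((Quot.out g).1, (Quot.out g).2) = g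
  rw [Prod.mk.eta]
  exact Quot.out_eq g

open MeasureTheory ProbabilityTheory in
/-- **Lemma (`G_{f,H}` is a `(2d-2)`-dependent random graph with edge probability `p²`).** -/
theorem GfH_is_dependent_random_graph
    {n d : ℕ} (hd : 0 < d) {p : ℝ} (hp : 0 < p) (hp1 : p < 1)
    {Ω : Type} [MeasurableSpace Ω] (μ : Measure Ω) [IsProbabilityMeasure μ]
    (E : Fin n × Fin n → Ω → Bool) (hmeas : ∀ e, Measurable (E e))
    (hindep : iIndepFun E μ)
    (hprob : ∀ e, μ {ω | E e ω = true} = ENNReal.ofReal p)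
    (f : Fin n → Fin n) (hf : DLimited n d f)
    (Y : Sym2 (Fin n) → Ω → Bool)
    (hY : ∀ i j : Fin n, Y s(i, j) = fun ω => E (i, f j) ω && E (j, f i) ω) :
    ∀ i j : Fin n, i ≠ j →
      μ {ω | Y s(i, j) ω = true} = ENNReal.ofReal (p ^ 2) ∧
      (depSet n f i j).card ≤ 2 * d - 2 ∧
      IndepFun (Y s(i, j))
        (fun ω (g : {g : Sym2 (Fin n) // ¬ g.IsDiag ∧ g ∉ depSet n f i j ∧
            g ≠ s(i, j)}) => Y g.1 ω) μ := by
  classical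
  intro i j hij
  have hane : (i, f j) ≠ (j, f i) := fun h => hij (congrArg Prod.fst h)
  refine ⟨?_, ?_, ?_⟩
  · -- probability p²
    have hset : {ω | Y s(i, j) ω = true} =
        (E (i, f j) ⁻¹' {true}) ∩ (E (j, f i) ⁻¹' {true}) := by
      ext ω; simp [hY i j]
    have hind : IndepFun (E (i, f j)) (E (j, f i)) μ := hindep.indepFun hane
    rw [hset, hind.measure_inter_preimage_eq_mul _ _ trivial trivial]
    have h1 : E (i, f j) ⁻¹' {true} = {ω | E (i, f j) ω = true} := by ext ω; simp
    have h2 : E (j, f i) ⁻¹' {true} = {ω | E (j, f i) ω = true} := by ext ω; simp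
    rw [h1, h2, hprob, hprob, sq, ENNReal.ofReal_mul hp.le]
  · -- cardinality bound
    have hcard : ∀ k : Fin n,
        (Finset.univ.filter fun u : Fin n => f u = f k ∧ u ≠ k).card ≤ d - 1 := by
      intro k
      have he : (Finset.univ.filter fun u : Fin n => f u = f k ∧ u ≠ k) =
          (Finset.univ.filter fun u : Fin n => f u = f k).erase k := by
        ext u; simp [Finset.mem_erase, and_comm]
      rw [he, Finset.card_erase_of_mem (by simp)]
      exact Nat.sub_le_sub_right (hf (f k)) 1
    have h1 := Finset.card_union_le
      ((Finset.univ.filter fun u : Fin n => f u = f j ∧ u ≠ j).image fun u => s(i, u))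
      ((Finset.univ.filter fun u : Fin n => f u = f i ∧ u ≠ i).image fun u => s(j, u))
    have h2 := Finset.card_image_le
      (s := Finset.univ.filter fun u : Fin n => f u = f j ∧ u ≠ j) (f := fun u => s(i, u))
    have h3 := Finset.card_image_le
      (s := Finset.univ.filter fun u : Fin n => f u = f i ∧ u ≠ i) (f := fun u => s(j, u))
    have h4 := hcard j
    have h5 := hcard i
    unfold depSet
    omega
  · -- independence
    set S : Finset (Fin n × Fin n) := {(i, f j), (j, f i)} with hS
    set T : Finset (Fin n × Fin n) := Sᶜ with hT
    -- the key combinatorial claim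
    have key : ∀ u v : Fin n, u ≠ v → s(u, v) ∉ depSet n f i j → s(u, v) ≠ s(i, j) →
        (u, f v) ∈ T ∧ (v, f u) ∈ T := by
      intro u v huv hdep hne
      have main : ∀ a b : Fin n, a ≠ b → s(a, b) = s(u, v) → (a, f b) ∉ S := by
        intro a b hab hs hmem
        simp only [hS, Finset.mem_insert, Finset.mem_singleton, Prod.mk.injEq] at hmem
        rcases hmem with ⟨ha, hb⟩ | ⟨ha, hb⟩
        · subst ha
          have hbj : b ≠ j := by
            intro h; subst h; exact hne (hs ▸ rfl)
          apply hdep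
          rw [← hs]
          apply Finset.mem_union_left
          exact Finset.mem_image.2 ⟨b, Finset.mem_filter.2 ⟨Finset.mem_univ _, hb, hbj⟩, rfl⟩
        · subst ha
          have hbi : b ≠ i := by
            intro h; subst h
            exact hne (hs ▸ Sym2.eq_swap)
          apply hdep
          rw [← hs]
          apply Finset.mem_union_right
          exact Finset.mem_image.2 ⟨b, Finset.mem_filter.2 ⟨Finset.mem_univ _, hb, hbi⟩, rfl⟩
      constructor
      · simp only [hT, Finset.mem_compl]
        exact main u v huv rfl
      · simp only [hT, Finset.mem_compl]
        exact main v u (Ne.symm huv) (Sym2.eq_swap) 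
    -- representative data for each pair in the index subtype
    set SubT := {g : Sym2 (Fin n) // ¬ g.IsDiag ∧ g ∉ depSet n f i j ∧ g ≠ s(i, j)}
    have hrep : ∀ g : SubT, (Quot.out g.1).1 ≠ (Quot.out g.1).2 := by
      intro g
      intro h
      apply g.2.1
      rw [← sym2_out_eq g.1, Sym2.mk_isDiag_iff]
      exact h
    have memT : ∀ g : SubT,
        ((Quot.out g.1).1, f (Quot.out g.1).2) ∈ T ∧
        ((Quot.out g.1).2, f (Quot.out g.1).1) ∈ T := by
      intro g
      exact key _ _ (hrep g) (by rw [sym2_out_eq g.1]; exact g.2.2.1)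
        (by rw [sym2_out_eq g.1]; exact g.2.2.2)
    have hiS : (i, f j) ∈ S := by simp [hS]
    have hjS : (j, f i) ∈ S := by simp [hS]
    let φ : (∀ _ : (S : Finset _), Bool) → Bool := fun h => h ⟨(i, f j), hiS⟩ && h ⟨(j, f i), hjS⟩
    let ψ : (∀ _ : (T : Finset _), Bool) → (SubT → Bool) := fun h g =>
      h ⟨((Quot.out g.1).1, f (Quot.out g.1).2), (memT g).1⟩ &&
      h ⟨((Quot.out g.1).2, f (Quot.out g.1).1), (memT g).2⟩
    have hφ : Measurable φ := meas_and_aux _ _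
    have hψ : Measurable ψ :=
      measurable_pi_lambda _ fun g => meas_and_aux _ _
    have base : IndepFun (fun ω (e : (S : Finset _)) => E e ω)
        (fun ω (e : (T : Finset _)) => E e ω) μ :=
      hindep.indepFun_finset S T disjoint_compl_right hmeas
    have final := base.comp hφ hψ
    have e1 : (φ ∘ fun ω (e : (S : Finset _)) => E e ω) = Y s(i, j) := by
      funext ω
      simp only [Function.comp, φ, hY i j]
    have e2 : (ψ ∘ fun ω (e : (T : Finset _)) => E e ω) =
        fun ω (g : SubT) => Y g.1 ω := by
      funext ω g
      simp only [Function.comp, ψ]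
      conv_rhs => rw [← sym2_out_eq g.1, hY]
    rwa [e1, e2] at final
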